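/- arXiv:2311.18408 — 4 statements merged into one kernel-verified Lean document; each statement's English description precedes it below -/
import Mathlib

section
/- In the free abelian group ℤ^n with standard inverse-closed generating set X of size 2n, the geodesic growth series equals 1 + Σ_{j=1}^{n} (-1)^{n-j} 2^j · C(n,j) · (jz)/(1-jz); equivalently, the number of geodesic words of length m ≥ 1 over X is Σ_{j=1}^{n} (-1)^{n-j} 2^j · C(n,j) · j^m. -/
open Finset


/-- The element of `ℤⁿ` represented by a word over the standard inverse-closed
generating set, modeled as `Fin n × Bool` where `(i, true)` is `e_i` and
`(i, false)` is `e_i⁻¹`. -/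
def zPowEval {n : ℕ} (w : List (Fin n × Bool)) : Fin n → ℤ :=
  fun i => (w.count (i, true) : ℤ) - (w.count (i, false) : ℤ)

/-- A word over the standard generators of `ℤⁿ` is geodesic iff its length equals
the word length `Σᵢ |gᵢ|` of the element `g` of `ℤⁿ` that it represents. -/
def IsZnGeodesic {n : ℕ} (w : List (Fin n × Bool)) : Prop :=
  (w.length : ℤ) = ∑ i : Fin n, |zPowEval w i|

lemma length_eq_sum_counts {n : ℕ} (w : List (Fin n × Bool)) :
    w.length = ∑ i : Fin n, (w.count (i, true) + w.count (i, false)) := by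
  have h1 : ∀ w : List (Fin n × Bool), w.length = ∑ x : Fin n × Bool, w.count x := by
    intro w
    induction w with
    | nil => simp
    | cons a t ih =>
        simp [List.count_cons, Finset.sum_add_distrib, ← ih, Finset.sum_ite_eq,
          Finset.sum_ite_eq', add_comm]
  rw [h1 w, Fintype.sum_prod_type]
  refine Finset.sum_congr rfl fun i _ => ?_
  simp [add_comm]

lemma isZnGeodesic_iff {n : ℕ} (w : List (Fin n × Bool)) :
    IsZnGeodesic w ↔ ∀ i : Fin n, (i, true) ∉ w ∨ (i, false) ∉ w := by
  unfold IsZnGeodesic zPowEval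
  rw [length_eq_sum_counts]
  push_cast
  rw [eq_comm, Finset.sum_eq_sum_iff_of_le (fun i _ => by
    have := abs_sub (w.count (i, true) : ℤ) (w.count (i, false) : ℤ)
    simpa using this)]
  simp only [Finset.mem_univ, true_implies]
  refine forall_congr' fun i => ?_
  have ha : (0:ℤ) ≤ (w.count (i, true) : ℤ) := Int.natCast_nonneg _
  have hb : (0:ℤ) ≤ (w.count (i, false) : ℤ) := Int.natCast_nonneg _
  rw [← List.count_eq_zero, ← List.count_eq_zero]
  constructor
  · intro h
    rcases abs_cases ((w.count (i, true) : ℤ) - (w.count (i, false) : ℤ)) with ⟨h1, _⟩ | ⟨h1, _⟩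
    · right; omega
    · left; omega
  · rintro (h | h) <;> rw [h] <;> push_cast <;> simp [abs_of_nonneg, abs_of_nonpos, ha, hb]

/-- Geodesic condition for words given as functions. -/
def ZGeo {n m : ℕ} (v : Fin m → Fin n × Bool) : Prop :=
  ∀ i : Fin n, (∀ k, v k ≠ (i, true)) ∨ (∀ k, v k ≠ (i, false))

instance {n m : ℕ} : DecidablePred (ZGeo (n := n) (m := m)) := fun v => by
  unfold ZGeo; infer_instance

lemma zgeo_ofFn_iff {n m : ℕ} (v : Fin m → Fin n × Bool) :
    IsZnGeodesic (List.ofFn v) ↔ ZGeo v := by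
  rw [isZnGeodesic_iff]
  unfold ZGeo
  refine forall_congr' fun i => or_congr ?_ ?_ <;>
    simp [List.mem_ofFn, Set.mem_range, not_exists]

lemma ofFn_get_cast {α : Type*} {m : ℕ} (w : List α) (h : w.length = m) :
    List.ofFn (fun k : Fin m => w.get (Fin.cast h.symm k)) = w := by
  subst h; simp

noncomputable def eWords {n m : ℕ} :
    {w : List (Fin n × Bool) // w.length = m ∧ IsZnGeodesic w} ≃
      {v : Fin m → Fin n × Bool // ZGeo v} where
  toFun := fun ⟨w, hw⟩ => ⟨fun k => w.get (Fin.cast hw.1.symm k), by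
    rw [← zgeo_ofFn_iff, ofFn_get_cast w hw.1]; exact hw.2⟩
  invFun := fun ⟨v, hv⟩ => ⟨List.ofFn v, by simp, (zgeo_ofFn_iff v).2 hv⟩
  left_inv := fun ⟨w, hw⟩ => Subtype.ext (ofFn_get_cast w hw.1)
  right_inv := fun ⟨v, hv⟩ => Subtype.ext (by funext k; simp [List.get_ofFn])

lemma ncard_words {n m : ℕ} :
    ({w : List (Fin n × Bool) | w.length = m ∧ IsZnGeodesic w}).ncard
      = (univ.filter (ZGeo (n := n) (m := m))).card := by
  rw [← Nat.card_coe_set_eq]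
  have h : Nat.card ↥{w : List (Fin n × Bool) | w.length = m ∧ IsZnGeodesic w}
      = Nat.card {v : Fin m → Fin n × Bool // ZGeo v} :=
    Nat.card_congr ((Equiv.subtypeEquivRight fun w => Iff.rfl).trans (eWords (n := n) (m := m)))
  rw [h, Nat.card_eq_fintype_card, Fintype.card_subtype]

lemma fiber_card {n m : ℕ} (f : Fin m → Fin n) :
    ((univ.filter (ZGeo (n := n) (m := m))).filter
        (fun w => (fun k => (w k).1) = f)).card = 2 ^ (univ.image f).card := by
  rw [← Finset.card_powerset]
  refine Finset.card_nbij' (i := fun w => (univ.filter fun k => (w k).2).image f)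
    (j := fun T => fun k => (f k, decide (f k ∈ T))) ?_ ?_ ?_ ?_
  · intro w _
    exact Finset.mem_powerset.mpr (Finset.image_subset_image (Finset.filter_subset _ _))
  · intro T _
    refine Finset.mem_filter.mpr ⟨Finset.mem_filter.mpr ⟨mem_univ _, ?_⟩, rfl⟩
    intro i
    by_cases hi : i ∈ T
    · right; intro k hk
      rw [Prod.mk.injEq] at hk
      simp [hk.1, hi] at hk
    · left; intro k hk
      rw [Prod.mk.injEq] at hk
      simp [hk.1, hi] at hk
  · intro w hw
    obtain ⟨hgeo, hfst⟩ := Finset.mem_filter.mp hw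
    have hgeo' : ZGeo w := (Finset.mem_filter.mp hgeo).2
    have hf : ∀ k, (w k).1 = f k := fun k => congrFun hfst k
    funext k
    refine Prod.ext (hf k).symm ?_
    show (decide _) = (w k).2
    rcases h2 : (w k).2 with _ | _
    · -- snd = false : show f k not in the image
      simp only [decide_eq_false_iff_not]
      intro hmem
      obtain ⟨l, hl, hlk⟩ := Finset.mem_image.mp hmem
      have hl2 : (w l).2 = true := (Finset.mem_filter.mp hl).2
      rcases hgeo' (f k) with h | h
      · exact h l (by rw [← hlk, ← hf l, ← hl2])
      · exact h k (by rw [← hf k, ← h2])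
    · simp only [decide_eq_true_eq]
      exact Finset.mem_image.mpr ⟨k, Finset.mem_filter.mpr ⟨mem_univ _, h2⟩, rfl⟩
  · intro T hT
    have hT' := Finset.mem_powerset.mp hT
    ext x
    constructor
    · intro hx
      obtain ⟨k, hk, hkx⟩ := Finset.mem_image.mp hx
      have := (Finset.mem_filter.mp hk).2
      simp only [decide_eq_true_eq] at this
      exact hkx ▸ this
    · intro hx
      obtain ⟨k, _, hkx⟩ := Finset.mem_image.mp (hT' hx)
      refine Finset.mem_image.mpr ⟨k, Finset.mem_filter.mpr ⟨mem_univ _, ?_⟩, hkx⟩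
      simp [hkx, hx]

lemma card_geo {n m : ℕ} :
    ((univ.filter (ZGeo (n := n) (m := m))).card : ℤ)
      = ∑ f : Fin m → Fin n, (2:ℤ) ^ (univ.image f).card := by
  rw [Finset.card_eq_sum_card_fiberwise (f := fun w k => (w k).1) (t := univ)
    (fun x _ => mem_univ _)]
  push_cast
  refine Finset.sum_congr rfl fun f _ => ?_
  rw [fiber_card f]
  push_cast
  ring

lemma sum_neg_two_pow {n : ℕ} (A : Finset (Fin n)) :
    ∑ U ∈ A.powerset, (-1:ℤ) ^ (A.card - U.card) * 2 ^ U.card = 1 := by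
  have h := Finset.prod_add (fun _ : Fin n => (2:ℤ)) (fun _ : Fin n => (-1:ℤ)) A
  simp only [Finset.prod_const] at h
  have h2 : ∀ U ∈ A.powerset, (-1:ℤ) ^ (A.card - U.card) * 2 ^ U.card
      = 2 ^ U.card * (-1) ^ (A \ U).card := by
    intro U hU
    rw [Finset.card_sdiff_of_subset (Finset.mem_powerset.mp hU), mul_comm]
  rw [Finset.sum_congr rfl h2, ← h]
  norm_num

lemma sum_supersets {n : ℕ} (S : Finset (Fin n)) :
    ∑ T ∈ univ.powerset.filter (fun T => S ⊆ T), (-1:ℤ) ^ (n - T.card) * 2 ^ T.card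
      = 2 ^ S.card := by
  have key : ∑ T ∈ univ.powerset.filter (fun T => S ⊆ T), (-1:ℤ) ^ (n - T.card) * 2 ^ T.card
      = ∑ U ∈ Sᶜ.powerset, (-1:ℤ) ^ (n - (S ∪ U).card) * 2 ^ (S ∪ U).card := by
    refine Finset.sum_nbij' (fun T => T \ S) (fun U => S ∪ U) ?_ ?_ ?_ ?_ ?_
    · intro T hT
      rw [Finset.mem_powerset, Finset.compl_eq_univ_sdiff]
      exact Finset.sdiff_subset_sdiff (Finset.subset_univ T) le_rfl
    · intro U _
      exact Finset.mem_filter.mpr ⟨Finset.mem_powerset.mpr (Finset.subset_univ _),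
        Finset.subset_union_left⟩
    · intro T hT
      exact Finset.union_sdiff_of_subset (Finset.mem_filter.mp hT).2
    · intro U hU
      refine Finset.union_sdiff_cancel_left (Finset.disjoint_left.mpr ?_)
      intro a haS haU
      exact (Finset.mem_compl.mp ((Finset.mem_powerset.mp hU) haU)) haS
    · intro T hT
      rw [Finset.union_sdiff_of_subset (Finset.mem_filter.mp hT).2]
  rw [key]
  have h2 : ∀ U ∈ Sᶜ.powerset, (-1:ℤ) ^ (n - (S ∪ U).card) * 2 ^ (S ∪ U).card
      = 2 ^ S.card * ((-1:ℤ) ^ (Sᶜ.card - U.card) * 2 ^ U.card) := by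
    intro U hU
    have hd : Disjoint S U := Finset.disjoint_left.mpr
      (fun a haS haU => (Finset.mem_compl.mp ((Finset.mem_powerset.mp hU) haU)) haS)
    rw [Finset.card_union_of_disjoint hd]
    have h1 : S.card + U.card ≤ n := by
      have h5 := Finset.card_le_univ (S ∪ U)
      rw [Finset.card_union_of_disjoint hd] at h5
      simpa using h5
    have h3 : Sᶜ.card = n - S.card := by
      rw [Finset.card_compl, Fintype.card_fin]
    have h4 : n - (S.card + U.card) = Sᶜ.card - U.card := by omega
    rw [h4, pow_add]
    ring
  rw [Finset.sum_congr rfl h2, ← Finset.mul_sum, sum_neg_two_pow, mul_one]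

lemma sum_image_eq {n m : ℕ} :
    (∑ f : Fin m → Fin n, (2:ℤ) ^ (univ.image f).card)
      = ∑ T ∈ (univ : Finset (Fin n)).powerset,
          (-1:ℤ) ^ (n - T.card) * 2 ^ T.card * (T.card : ℤ) ^ m := by
  have hcard : ∀ T : Finset (Fin n), ((T.card : ℤ)) ^ m
      = ∑ f : Fin m → Fin n, if univ.image f ⊆ T then (1:ℤ) else 0 := by
    intro T
    rw [Finset.sum_boole]
    have he : (univ.filter fun f : Fin m → Fin n => univ.image f ⊆ T)
        = Fintype.piFinset (fun _ : Fin m => T) := by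
      ext f
      simp [Fintype.mem_piFinset, Finset.image_subset_iff]
    rw [he, Fintype.card_piFinset]
    push_cast
    simp
  symm
  calc ∑ T ∈ (univ : Finset (Fin n)).powerset,
          (-1:ℤ) ^ (n - T.card) * 2 ^ T.card * (T.card : ℤ) ^ m
      = ∑ T ∈ (univ : Finset (Fin n)).powerset, ∑ f : Fin m → Fin n,
          (-1:ℤ) ^ (n - T.card) * 2 ^ T.card * (if univ.image f ⊆ T then (1:ℤ) else 0) := by
        refine Finset.sum_congr rfl fun T _ => ?_
        rw [hcard T, Finset.mul_sum]
    _ = ∑ f : Fin m → Fin n, ∑ T ∈ (univ : Finset (Fin n)).powerset,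
          (-1:ℤ) ^ (n - T.card) * 2 ^ T.card * (if univ.image f ⊆ T then (1:ℤ) else 0) :=
        Finset.sum_comm
    _ = ∑ f : Fin m → Fin n, (2:ℤ) ^ (univ.image f).card := by
        refine Finset.sum_congr rfl fun f _ => ?_
        rw [← sum_supersets (univ.image f), Finset.sum_filter]
        refine Finset.sum_congr rfl fun T _ => ?_
        by_cases h : univ.image f ⊆ T <;> simp [h]

/-- In `ℤⁿ` with the standard inverse-closed generating set of size `2n`, the number of
geodesic words of length `m ≥ 1` is `Σ_{j=1}^n (-1)^{n-j} 2^j C(n,j) j^m`; equivalently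
the geodesic growth series is `1 + Σ_{j=1}^n (-1)^{n-j} 2^j C(n,j) jz/(1-jz)`. -/
theorem geodesic_growth_Zn (n m : ℕ) (hm : 1 ≤ m) :
    (Set.ncard {w : List (Fin n × Bool) | w.length = m ∧ IsZnGeodesic w} : ℤ) =
      ∑ j ∈ Finset.Icc 1 n, (-1 : ℤ) ^ (n - j) * 2 ^ j * (n.choose j) * (j : ℤ) ^ m := by
  rw [ncard_words, card_geo, sum_image_eq, Finset.sum_powerset]
  have hstep : ∀ j ∈ Finset.range ((univ : Finset (Fin n)).card + 1),
      (∑ T ∈ Finset.powersetCard j (univ : Finset (Fin n)),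
        (-1:ℤ) ^ (n - T.card) * 2 ^ T.card * (T.card : ℤ) ^ m)
      = (-1:ℤ) ^ (n - j) * 2 ^ j * (n.choose j) * (j : ℤ) ^ m := by
    intro j _
    have e : ∀ T ∈ Finset.powersetCard j (univ : Finset (Fin n)),
        (-1:ℤ) ^ (n - T.card) * 2 ^ T.card * (T.card : ℤ) ^ m
          = (-1:ℤ) ^ (n - j) * 2 ^ j * (j : ℤ) ^ m := by
      intro T hT
      rw [(Finset.mem_powersetCard.mp hT).2]
    rw [Finset.sum_congr rfl e, Finset.sum_const, Finset.card_powersetCard,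
      Finset.card_univ, Fintype.card_fin, nsmul_eq_mul]
    ring
  rw [Finset.sum_congr rfl hstep, eq_comm]
  apply Finset.sum_subset
  · intro j hj
    simp only [Finset.mem_Icc] at hj
    simp only [Finset.mem_range, Finset.card_univ, Fintype.card_fin]
    omega
  · intro j hj hnot
    simp only [Finset.mem_range, Finset.card_univ, Fintype.card_fin] at hj
    simp only [Finset.mem_Icc] at hnot
    have hj0 : j = 0 := by omega
    subst hj0
    simp [zero_pow (by omega : m ≠ 0)]
end

section
/- Let X be a finite alphabet. The class of regular languages over X is closed under the cyclic permutation operation: if L is regular then Cyc(L) = {vu : uv ∈ L} is regular. -/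
/-- The set of all rotations (cyclic permutations) of words of a language. -/
def cycLang {X : Type*} (L : Language X) : Language X :=
  {w | ∃ u v : List X, u ++ v ∈ L ∧ w = v ++ u}

section aux

variable {X : Type*} {Q : Type} (M : DFA X Q)

/-- NFA for the cyclic shift: state `(q, p, b)` means we guessed the split state `q`,
are currently in state `p`, and `b` records whether we have switched to reading
the second part of the rotated word. -/
def cycNFA : NFA X (Q × Q × Bool) where
  step := fun s a =>
    {t | (t = (s.1, M.step s.2.1 a, s.2.2)) ∨
         (s.2.2 = false ∧ s.2.1 ∈ M.accept ∧ t = (s.1, M.step M.start a, true))}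
  start := {s | s.2.1 = s.1 ∧ s.2.2 = false}
  accept := {s | (s.2.2 = true ∧ s.2.1 = s.1) ∨
      (s.2.2 = false ∧ s.1 = M.start ∧ s.2.1 ∈ M.accept)}

lemma cycNFA_eval (w : List X) (q p : Q) (b : Bool) :
    (q, p, b) ∈ (cycNFA M).eval w ↔
      if b then
        ∃ v a u, w = v ++ a :: u ∧ M.evalFrom q v ∈ M.accept ∧
          p = M.evalFrom (M.step M.start a) u
      else p = M.evalFrom q w := by
  induction w using List.reverseRecOn generalizing p b with
  | nil =>
    have hmem : (q, p, b) ∈ (cycNFA M).eval [] ↔ p = q ∧ b = false := Iff.rfl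
    rw [hmem]
    cases b with
    | false =>
      simp only [if_neg Bool.false_ne_true, DFA.evalFrom_nil, and_true]
    | true =>
      simp only [if_pos rfl]
      constructor
      · rintro ⟨-, h⟩; simp at h
      · rintro ⟨v, a, u, hw, -⟩; exact absurd hw (by simp)
  | append_singleton w a ih =>
    rw [NFA.eval_append_singleton, NFA.mem_stepSet]
    constructor
    · rintro ⟨⟨q', p', b'⟩, ht, hs⟩
      simp only [cycNFA, Set.mem_setOf_eq, Prod.mk.injEq] at hs
      rcases hs with ⟨rfl, rfl, rfl⟩ | ⟨hb', hacc, rfl, rfl, rfl⟩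
      · cases b with
        | false =>
          have hp' : p' = M.evalFrom q w := by
            simpa [if_neg Bool.false_ne_true] using (ih p' false).mp ht
          subst hp'
          simp only [if_neg Bool.false_ne_true, DFA.evalFrom_append_singleton]
        | true =>
          obtain ⟨v, a', u, hw, haccv, hp'⟩ := by
            simpa only [if_pos rfl] using (ih p' true).mp ht
          simp only [if_pos rfl]
          exact ⟨v, a', u ++ [a], by simp [hw], haccv, by
            rw [DFA.evalFrom_append_singleton, ← hp']⟩
      · -- switch transition: b' = false, p' ∈ accept
        subst hb'
        have hp' : p' = M.evalFrom q w := by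
          simpa [if_neg Bool.false_ne_true] using (ih p' false).mp ht
        simp only [if_pos rfl]
        exact ⟨w, a, [], by simp, hp' ▸ hacc, by simp⟩
    · intro h
      cases b with
      | false =>
        simp only [if_neg Bool.false_ne_true] at h
        refine ⟨(q, M.evalFrom q w, false), (ih _ false).mpr (by
          simp [if_neg Bool.false_ne_true]), ?_⟩
        simp only [cycNFA, Set.mem_setOf_eq]
        left
        rw [h, DFA.evalFrom_append_singleton]
      | true =>
        simp only [if_pos rfl] at h
        obtain ⟨v, a', u, hw, hacc, hp⟩ := h
        rcases u.eq_nil_or_concat with rfl | ⟨u', a'', rfl⟩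
        · obtain ⟨hwv, haa⟩ : w = v ∧ [a] = [a'] :=
            List.append_inj' (by simpa using hw) rfl
          obtain rfl : a = a' := by simpa using haa
          subst hwv
          refine ⟨(q, M.evalFrom q w, false), (ih _ false).mpr (by
            simp [if_neg Bool.false_ne_true]), ?_⟩
          simp only [cycNFA, Set.mem_setOf_eq]
          right
          refine ⟨by trivial, hacc, ?_⟩
          rw [hp, DFA.evalFrom_nil]
        · rw [List.concat_eq_append, ← List.cons_append, ← List.append_assoc] at hw
          obtain ⟨hw', haa⟩ : w = v ++ a' :: u' ∧ [a] = [a''] :=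
            List.append_inj' hw rfl
          obtain rfl : a = a'' := by simpa using haa
          refine ⟨(q, M.evalFrom (M.step M.start a') u', true),
            (ih _ true).mpr (by
              simp only [if_pos rfl]; exact ⟨v, a', u', hw', hacc, rfl⟩), ?_⟩
          simp only [cycNFA, Set.mem_setOf_eq]
          left
          rw [hp, List.concat_eq_append, DFA.evalFrom_append_singleton]

lemma cycNFA_accepts (L : Language X) (hM : M.accepts = L) :
    (cycNFA M).accepts = cycLang L := by
  ext w
  rw [NFA.accepts]
  constructor
  · rintro ⟨⟨q, p, b⟩, hacc, hev⟩
    simp only [cycNFA, Set.mem_setOf_eq] at hacc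
    rcases hacc with ⟨hb, hpq⟩ | ⟨hb, hq, hpacc⟩
    · subst hb
      obtain ⟨v, a, u, hw, hvacc, hp⟩ := by
        simpa only [if_pos rfl] using (cycNFA_eval M w q p true).mp hev
      refine ⟨a :: u, v, ?_, hw⟩
      rw [← hM, DFA.mem_accepts]
      have h1 : M.eval (a :: u ++ v) = M.evalFrom (M.evalFrom M.start (a :: u)) v := by
        rw [show (a :: u ++ v : List X) = (a :: u) ++ v by simp]
        exact M.evalFrom_of_append _ _ _
      have h2 : M.evalFrom M.start (a :: u) = M.evalFrom (M.step M.start a) u := rfl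
      rw [h1, h2, ← hp, hpq]
      exact hvacc
    · subst hb hq
      have hp : p = M.evalFrom M.start w := by
        simpa only [if_neg Bool.false_ne_true] using
          (cycNFA_eval M w M.start p false).mp hev
      refine ⟨[], w, ?_, by simp⟩
      rw [← hM, DFA.mem_accepts]
      rw [hp] at hpacc
      simpa [DFA.eval] using hpacc
  · rintro ⟨u, v, huv, rfl⟩
    rw [← hM, DFA.mem_accepts] at huv
    rcases u with _ | ⟨a, u'⟩
    · exact ⟨(M.start, M.evalFrom M.start v, false),
        Or.inr ⟨rfl, rfl, by simpa [DFA.eval] using huv⟩,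
        (cycNFA_eval M _ _ _ false).mpr (by simp [if_neg Bool.false_ne_true])⟩
    · set q := M.evalFrom M.start (a :: u') with hq
      refine ⟨(q, q, true), Or.inl ⟨rfl, rfl⟩,
        (cycNFA_eval M _ q q true).mpr ?_⟩
      simp only [if_pos rfl]
      refine ⟨v, a, u', rfl, ?_, ?_⟩
      · have h1 : M.eval (a :: u' ++ v) = M.evalFrom q v := by
          rw [show (a :: u' ++ v : List X) = (a :: u') ++ v by simp]
          exact M.evalFrom_of_append _ _ _
        rw [← h1]; exact huv
      · exact hq
end aux

/-- Regular languages over a finite alphabet are closed under cyclic permutation. -/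
theorem regular_closed_under_cyc {X : Type*} [Fintype X] (L : Language X)
    (hL : L.IsRegular) : (cycLang L).IsRegular := by
  obtain ⟨Q, hQ, M, hM⟩ := hL
  classical
  exact ⟨Set (Q × Q × Bool), inferInstance, (cycNFA M).toDFA,
    by rw [NFA.toDFA_correct, cycNFA_accepts M L hM]⟩
end

section
/- Let M = (X, Q, q_0, P, δ) be a deterministic finite automaton accepting language L. For each state q ∈ Q let P_q be the language accepted by changing the accept set to {q}, and S_q the language accepted by changing the initial state to q. Then Cyc(L) = ⋃_{q ∈ Q} S_q · P_q. -/
/-- For a DFA `M` accepting `L`, with `P_q` the words sending the start state to `q` and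
`S_q` the words sent from `q` into the accept set, the language of rotations of words of
`L` equals `⋃_q S_q · P_q`. -/
theorem cyc_eq_union_suffix_prefix {X Q : Type*} (M : DFA X Q) :
    {w : List X | ∃ u v : List X, u ++ v ∈ M.accepts ∧ w = v ++ u} =
      ⋃ q : Q, {w : List X | ∃ s p : List X,
        M.evalFrom q s ∈ M.accept ∧ M.evalFrom M.start p = q ∧ w = s ++ p} := by
  ext w
  simp only [Set.mem_iUnion, Set.mem_setOf_eq]
  constructor
  · rintro ⟨u, v, hacc, rfl⟩
    exact ⟨M.eval u, v, u, by simpa [DFA.mem_accepts, DFA.eval, DFA.evalFrom, List.foldl_append] using hacc,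
      rfl, rfl⟩
  · rintro ⟨q, s, p, hs, hp, rfl⟩
    have h2 : M.evalFrom M.start (p ++ s) = M.evalFrom q s := by
      rw [← hp]; simp [DFA.evalFrom, List.foldl_append]
    exact ⟨p, s, by simpa [DFA.mem_accepts, DFA.eval, h2] using hs, rfl⟩
end

section
/- The strict growth series of the language of nonempty cyclically reduced words in the free group F_k on k generators (over the inverse-closed basis of size 2k) is F(z) = 1/(1−(2k−1)z) + 1/(1−z) + 2(k−1)/(1−z^2) − 2k; equivalently, for n ≥ 1 the number of cyclically reduced words of length n is (2k−1)^n + 1 + (k−1)(1 + (−1)^n). -/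
def NonCancelling {k : ℕ} (x y : Fin k × Bool) : Prop :=
  ¬ (x.1 = y.1 ∧ x.2 = !y.2)

def CyclicallyReduced {k : ℕ} (w : List (Fin k × Bool)) : Prop :=
  ∀ i : ℕ, (w.rotate i).Chain' NonCancelling

namespace CycRedAux

variable {k : ℕ}

abbrev V (k : ℕ) := Fin k × Bool

instance (x y : V k) : Decidable (NonCancelling x y) := by
  unfold NonCancelling; exact instDecidableNot

def inv (x : V k) : V k := (x.1, !x.2)

lemma inv_inv (x : V k) : inv (inv x) = x := by simp [inv]

lemma inv_ne (x : V k) : inv x ≠ x := by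
  simp [inv, Prod.ext_iff]

lemma nc_iff (x y : V k) : NonCancelling x y ↔ y ≠ inv x := by
  obtain ⟨x1, x2⟩ := x; obtain ⟨y1, y2⟩ := y
  unfold NonCancelling inv
  cases x2 <;> cases y2 <;> simp [Prod.ext_iff, eq_comm]

lemma nc_refl (x : V k) : NonCancelling x x := by
  rw [nc_iff]; exact fun h => inv_ne x h.symm

/-- number of reduced paths of length `m` from `x` to `y`. -/
def P (k : ℕ) : ℕ → V k → V k → ℕ
  | 0, x, y => if x = y then 1 else 0
  | (m+1), x, y => ∑ z : V k, if NonCancelling x z then P k m z y else 0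

/-- the triple (a n, b n, c n). -/
def abc (k : ℕ) : ℕ → ℤ × ℤ × ℤ
  | 0 => (1, 0, 0)
  | (n+1) =>
    let p := abc k n
    let s := p.1 + p.2.1 + (2*(k:ℤ)-2) * p.2.2
    (s - p.2.1, s - p.1, s - p.2.2)

lemma card_V : Fintype.card (V k) = 2 * k := by
  simp [Fintype.card_prod, Nat.mul_comm]

lemma sum_P (hk : 1 ≤ k) (n : ℕ)
    (IH : ∀ x y : V k, (P k n x y : ℤ) =
      if y = x then (abc k n).1 else if y = inv x then (abc k n).2.1 else (abc k n).2.2) :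
    ∀ y : V k, (∑ z : V k, (P k n z y : ℤ)) =
      (abc k n).1 + (abc k n).2.1 + (2*(k:ℤ)-2) * (abc k n).2.2 := by
  intro y
  set a := (abc k n).1; set b := (abc k n).2.1; set c := (abc k n).2.2
  have key : ∀ z : V k, (P k n z y : ℤ) =
      c + (if z = y then a - c else 0) + (if z = inv y then b - c else 0) := by
    intro z
    rw [IH z y]
    rcases eq_or_ne z y with h1 | h1
    · subst h1
      simp [Ne.symm (inv_ne z)]
    · rcases eq_or_ne z (inv y) with h2 | h2
      · subst h2
        simp [Ne.symm (inv_ne y), inv_ne y, inv_inv]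
      · have h3 : ¬ y = z := fun h => h1 h.symm
        have h4 : ¬ y = inv z := fun h => h2 (by rw [h, inv_inv])
        simp [h1, h2, h3, h4]
  rw [Finset.sum_congr rfl (fun z _ => key z)]
  rw [Finset.sum_add_distrib, Finset.sum_add_distrib]
  rw [Finset.sum_ite_eq' Finset.univ y (fun _ => a - c),
      Finset.sum_ite_eq' Finset.univ (inv y) (fun _ => b - c)]
  simp only [Finset.mem_univ, if_true, Finset.sum_const, Finset.card_univ, card_V]
  push_cast
  ring

lemma P_eq (hk : 1 ≤ k) : ∀ (n : ℕ) (x y : V k), (P k n x y : ℤ) =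
    if y = x then (abc k n).1 else if y = inv x then (abc k n).2.1 else (abc k n).2.2 := by
  intro n
  induction n with
  | zero =>
    intro x y
    by_cases h : y = x
    · subst h; simp [P, abc]
    · have h' : ¬ x = y := fun e => h e.symm
      simp [P, abc, h, h', ite_self]
  | succ n IH =>
    intro x y
    have step : (P k (n+1) x y : ℤ) = (∑ z : V k, (P k n z y : ℤ)) - P k n (inv x) y := by
      show ((∑ z : V k, if NonCancelling x z then P k n z y else 0 : ℕ) : ℤ) = _
      push_cast
      have : ∀ z : V k, (if NonCancelling x z then (P k n z y : ℤ) else 0)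
          = (P k n z y : ℤ) - (if z = inv x then (P k n z y : ℤ) else 0) := by
        intro z
        by_cases h : z = inv x
        · subst h
          rw [if_neg (by rw [nc_iff]; simp), if_pos rfl]; ring
        · rw [if_pos (by rw [nc_iff]; exact h), if_neg h]; ring
      rw [Finset.sum_congr rfl (fun z _ => this z), Finset.sum_sub_distrib,
        Finset.sum_ite_eq' Finset.univ (inv x) (fun z => (P k n z y : ℤ))]
      simp
    rw [step, sum_P hk n IH y, IH (inv x) y]
    set a := (abc k n).1; set b := (abc k n).2.1; set c := (abc k n).2.2
    have habc : abc k (n+1) = (a + b + (2*(k:ℤ)-2)*c - b, a + b + (2*(k:ℤ)-2)*c - a,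
        a + b + (2*(k:ℤ)-2)*c - c) := rfl
    rw [habc]
    by_cases h1 : y = x
    · subst h1
      simp [Ne.symm (inv_ne y), inv_inv]
    · by_cases h2 : y = inv x
      · subst h2
        simp [inv_ne x, inv_inv]
      · simp [h1, h2, inv_inv]

lemma abc_identities (hk : 1 ≤ k) (n : ℕ) :
    (abc k n).1 - (abc k n).2.1 = 1 ∧
    (abc k n).1 + (abc k n).2.1 + (2*(k:ℤ)-2) * (abc k n).2.2 = (2*(k:ℤ)-1)^n ∧
    (k:ℤ) * ((abc k n).1 + (abc k n).2.1) = (2*(k:ℤ)-1)^n + ((k:ℤ)-1) * (-1:ℤ)^n := by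
  induction n with
  | zero =>
    have h0 : abc k 0 = (1, 0, 0) := rfl
    refine ⟨by rw [h0]; norm_num, by rw [h0]; ring, ?_⟩
    rw [h0]; ring
  | succ n IH =>
    obtain ⟨h1, h2, h3⟩ := IH
    set a := (abc k n).1 with ha
    set b := (abc k n).2.1 with hb
    set c := (abc k n).2.2 with hc
    have habc : abc k (n+1) = (a + b + (2*(k:ℤ)-2)*c - b, a + b + (2*(k:ℤ)-2)*c - a,
        a + b + (2*(k:ℤ)-2)*c - c) := rfl
    rw [habc]
    refine ⟨by ring_nf; linarith [h1], ?_, ?_⟩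
    · show (a + b + (2*(k:ℤ)-2)*c - b) + (a + b + (2*(k:ℤ)-2)*c - a)
        + (2*(k:ℤ)-2) * (a + b + (2*(k:ℤ)-2)*c - c) = (2*(k:ℤ)-1)^(n+1)
      rw [pow_succ]
      linear_combination (2*(k:ℤ)-1) * h2
    · show (k:ℤ) * ((a + b + (2*(k:ℤ)-2)*c - b) + (a + b + (2*(k:ℤ)-2)*c - a))
        = (2*(k:ℤ)-1)^(n+1) + ((k:ℤ)-1) * (-1:ℤ)^(n+1)
      rw [pow_succ, pow_succ]
      linear_combination 2*(k:ℤ) * h2 - h3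

/-- reduced paths as tuples. -/
def PathP (k : ℕ) (m : ℕ) (x y : V k) (g : Fin (m+1) → V k) : Prop :=
  g 0 = x ∧ g (Fin.last m) = y ∧ ∀ i : Fin m, NonCancelling (g i.castSucc) (g i.succ)

instance (m : ℕ) (x y : V k) : DecidablePred (PathP k m x y) := fun g => by
  unfold PathP; infer_instance

lemma card_paths : ∀ (m : ℕ) (x y : V k),
    Fintype.card {g : Fin (m+1) → V k // PathP k m x y g} = P k m x y := by
  intro m
  induction m with
  | zero =>
    intro x y
    by_cases hxy : x = y
    · subst hxy
      rw [show P k 0 x x = 1 from if_pos rfl, Fintype.card_eq_one_iff]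
      refine ⟨⟨fun _ => x, rfl, rfl, fun i => i.elim0⟩, ?_⟩
      rintro ⟨g, hg⟩
      apply Subtype.ext
      funext i
      have hi : i = 0 := Fin.ext (by omega)
      rw [hi]; exact hg.1
    · rw [show P k 0 x y = 0 from if_neg hxy, Fintype.card_eq_zero_iff]
      exact ⟨fun g => hxy (g.2.1.symm.trans g.2.2.1)⟩
  | succ m IH =>
    intro x y
    have hdec : Fintype.card {g : Fin (m+2) → V k // PathP k (m+1) x y g}
        = ∑ z : V k, Fintype.card
            {g : {g : Fin (m+2) → V k // PathP k (m+1) x y g} // g.1 1 = z} := by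
      rw [← Fintype.card_sigma]
      exact (Fintype.card_congr (Equiv.sigmaFiberEquiv
        (fun g : {g : Fin (m+2) → V k // PathP k (m+1) x y g} => g.1 1))).symm
    have hfiber : ∀ z : V k,
        Fintype.card {g : {g : Fin (m+2) → V k // PathP k (m+1) x y g} // g.1 1 = z}
          = if NonCancelling x z then P k m z y else 0 := by
      intro z
      by_cases hz : NonCancelling x z
      · rw [if_pos hz, ← IH z y]
        apply Fintype.card_congr
        refine ⟨?_, ?_, ?_, ?_⟩
        · rintro ⟨⟨g, hg⟩, h1⟩
          refine ⟨Fin.tail g, ?_, ?_, ?_⟩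
          · show g (Fin.succ 0) = z
            rwa [Fin.succ_zero_eq_one]
          · show g (Fin.succ (Fin.last m)) = y
            rw [Fin.succ_last]; exact hg.2.1
          · intro i
            have h2 := hg.2.2 i.succ
            rwa [← Fin.succ_castSucc] at h2
        · rintro ⟨g', hg'⟩
          refine ⟨⟨Fin.cons x g', rfl, ?_, ?_⟩, ?_⟩
          · show (Fin.cons x g' : Fin (m+2) → V k) (Fin.last (m+1)) = y
            rw [← Fin.succ_last, Fin.cons_succ]; exact hg'.2.1
          · intro j
            refine Fin.cases ?_ ?_ j
            · rw [Fin.castSucc_zero]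
              show NonCancelling ((Fin.cons x g' : Fin (m+2) → V k) 0)
                ((Fin.cons x g' : Fin (m+2) → V k) (Fin.succ 0))
              rw [Fin.cons_zero, Fin.cons_succ, hg'.1]
              exact hz
            · intro i
              rw [← Fin.succ_castSucc]
              show NonCancelling ((Fin.cons x g' : Fin (m+2) → V k) (Fin.succ i.castSucc))
                ((Fin.cons x g' : Fin (m+2) → V k) (Fin.succ i.succ))
              rw [Fin.cons_succ, Fin.cons_succ]
              exact hg'.2.2 i
          · show (Fin.cons x g' : Fin (m+2) → V k) 1 = z
            rw [← Fin.succ_zero_eq_one, Fin.cons_succ]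
            exact hg'.1
        · rintro ⟨⟨g, hg⟩, h1⟩
          apply Subtype.ext; apply Subtype.ext
          show Fin.cons x (Fin.tail g) = g
          rw [← hg.1]; exact Fin.cons_self_tail g
        · rintro ⟨g', hg'⟩
          apply Subtype.ext
          funext i
          show (Fin.cons x g' : Fin (m+2) → V k) i.succ = g' i
          rw [Fin.cons_succ]
      · rw [if_neg hz, Fintype.card_eq_zero_iff]
        refine ⟨fun g => hz ?_⟩
        have h2 := g.1.2.2.2 0
        rw [Fin.castSucc_zero, Fin.succ_zero_eq_one, g.1.2.1, g.2] at h2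
        exact h2
    rw [hdec, Finset.sum_congr rfl (fun z _ => hfiber z)]
    rfl

lemma card_cyc (m : ℕ) (x : V k) :
    Fintype.card {f : {f : Fin (m+1) → V k //
        ∀ i : Fin (m+1), NonCancelling (f i) (f (i+1))} // f.1 0 = x}
      = P k (m+1) x x := by
  rw [← card_paths (m+1) x x]
  apply Fintype.card_congr
  refine ⟨?_, ?_, ?_, ?_⟩
  · rintro ⟨⟨f, hf⟩, h0⟩
    have h0' : f 0 = x := h0
    refine ⟨Fin.snoc f x, ?_, by rw [Fin.snoc_last], ?_⟩
    · rw [show (0 : Fin (m+2)) = Fin.castSucc 0 from (Fin.castSucc_zero).symm,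
        Fin.snoc_castSucc]
      exact h0'
    · intro i
      rw [Fin.snoc_castSucc]
      by_cases hi : i = Fin.last m
      · subst hi
        rw [Fin.succ_last, Fin.snoc_last]
        have h2 := hf (Fin.last m)
        rwa [Fin.last_add_one, h0'] at h2
      · have hisucc : i.succ = Fin.castSucc (i + 1) := by
          apply Fin.ext
          rw [Fin.val_succ, Fin.coe_castSucc, Fin.val_add_one, if_neg hi]
        rw [hisucc, Fin.snoc_castSucc]
        exact hf i
  · rintro ⟨g, hg⟩
    refine ⟨⟨fun i => g i.castSucc, ?_⟩, ?_⟩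
    · intro i
      show NonCancelling (g i.castSucc) (g (i+1).castSucc)
      by_cases hi : i = Fin.last m
      · subst hi
        rw [Fin.last_add_one, Fin.castSucc_zero, hg.1]
        have h2 := hg.2.2 (Fin.last m)
        rwa [Fin.succ_last, hg.2.1] at h2
      · have hisucc : Fin.castSucc (i + 1) = i.succ := by
          apply Fin.ext
          rw [Fin.val_succ, Fin.coe_castSucc, Fin.val_add_one, if_neg hi]
        rw [hisucc]
        exact hg.2.2 i
    · show g (Fin.castSucc 0) = x
      rw [Fin.castSucc_zero]
      exact hg.1
  · rintro ⟨⟨f, hf⟩, h0⟩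
    apply Subtype.ext; apply Subtype.ext
    funext i
    exact @Fin.snoc_castSucc (m+1) (fun _ => V k) x f i
  · rintro ⟨g, hg⟩
    apply Subtype.ext
    show Fin.snoc (fun i => g i.castSucc) x = g
    rw [← hg.2.1]
    exact Fin.snoc_init_self g

lemma get_congr (w : List (V k)) (a b : ℕ) (ha : a < w.length) (hb : b < w.length)
    (h : a = b) : w.get ⟨a, ha⟩ = w.get ⟨b, hb⟩ := by subst h; rfl

lemma CR_iff (w : List (V k)) (hw : w.length ≠ 0) :
    CyclicallyReduced w ↔ ∀ (m : ℕ) (hm : m < w.length),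
      NonCancelling (w.get ⟨m, hm⟩)
        (w.get ⟨(m+1) % w.length, Nat.mod_lt _ (Nat.pos_of_ne_zero hw)⟩) := by
  constructor
  · intro h m hm
    rcases Nat.lt_or_ge 1 w.length with h2 | h2
    · have hc := (List.isChain_iff_getElem).mp (h m) 0 (by rw [List.length_rotate]; omega)
      simp only [List.getElem_rotate] at hc
      simp only [List.get_eq_getElem]
      convert hc using 2
      · simp [Nat.mod_eq_of_lt hm]
      · simp [Nat.add_comm]
    · have h1 : w.length = 1 := by omega
      have hm0 : m = 0 := by omega
      subst hm0
      have e : (⟨(0+1) % w.length, Nat.mod_lt _ (Nat.pos_of_ne_zero hw)⟩ : Fin w.length)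
          = ⟨0, hm⟩ := Fin.ext (by simp [h1])
      rw [e]
      exact nc_refl _
  · intro hyp i
    refine List.isChain_iff_getElem.mpr ?_
    intro j hj
    rw [List.length_rotate] at hj
    simp only [List.getElem_rotate]
    have hm : (j + i) % w.length < w.length := Nat.mod_lt _ (by omega)
    have hthis := hyp ((j+i) % w.length) hm
    simp only [List.get_eq_getElem] at hthis
    convert hthis using 2
    show (j + 1 + i) % w.length = ((j + i) % w.length + 1) % w.length
    rw [Nat.mod_add_mod]
    congr 1
    omega

lemma CR_ofFn {m : ℕ} (f : Fin (m+1) → V k) :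
    CyclicallyReduced (List.ofFn f) ↔
      ∀ i : Fin (m+1), NonCancelling (f i) (f (i+1)) := by
  have hlen : (List.ofFn f).length = m + 1 := List.length_ofFn
  rw [CR_iff _ (by rw [hlen]; omega)]
  have hval : ∀ i : Fin (m+1), ((i + 1 : Fin (m+1)) : ℕ) = ((i : ℕ) + 1) % (m+1) := by
    intro i
    rw [Fin.add_def, Fin.val_one']
    rw [Nat.add_mod (i : ℕ) 1 (m+1), Nat.mod_eq_of_lt i.isLt]
  constructor
  · intro h i
    have hm : (i : ℕ) < (List.ofFn f).length := by rw [hlen]; exact i.isLt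
    have hthis := h (i : ℕ) hm
    rw [List.get_ofFn, List.get_ofFn] at hthis
    convert hthis using 2
    all_goals exact Fin.ext (by simp only [Fin.coe_cast, Fin.val_mk, hval, hlen])
  · intro h j hj
    rw [List.get_ofFn, List.get_ofFn]
    have hj' : j < m + 1 := by rw [hlen] at hj; exact hj
    have hthis := h ⟨j, hj'⟩
    convert hthis using 2
    all_goals exact Fin.ext (by simp only [Fin.coe_cast, Fin.val_mk, hval, hlen])

lemma card_set (m : ℕ) :
    Set.ncard {w : List (V k) | w.length = m + 1 ∧ CyclicallyReduced w}
      = Fintype.card {f : Fin (m+1) → V k //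
          ∀ i : Fin (m+1), NonCancelling (f i) (f (i+1))} := by
  rw [← Nat.card_coe_set_eq, ← Nat.card_eq_fintype_card]
  apply Nat.card_congr
  symm
  apply Equiv.ofBijective
    (fun f : {f : Fin (m+1) → V k // ∀ i : Fin (m+1), NonCancelling (f i) (f (i+1))} =>
      (⟨List.ofFn f.1, List.length_ofFn, (CR_ofFn f.1).mpr f.2⟩ :
        {w : List (V k) | w.length = m + 1 ∧ CyclicallyReduced w}))
  constructor
  · intro a b hab
    exact Subtype.ext (List.ofFn_injective (congrArg Subtype.val hab))
  · rintro ⟨w, hw1, hw2⟩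
    have hofn : List.ofFn (fun i : Fin (m+1) => w.get (Fin.cast hw1.symm i)) = w := by
      apply List.ext_get (by simp [hw1])
      intro t h1 h2
      rw [List.get_ofFn]
      rfl
    refine ⟨⟨fun i => w.get (Fin.cast hw1.symm i), ?_⟩, Subtype.ext hofn⟩
    rw [← CR_ofFn (fun i : Fin (m+1) => w.get (Fin.cast hw1.symm i)), hofn]
    exact hw2

lemma sum_P_diag (hk : 1 ≤ k) (n : ℕ) :
    (∑ x : V k, (P k n x x : ℤ)) = (2 * (k:ℤ)) * (abc k n).1 := by
  rw [Finset.sum_congr rfl (fun x _ => by rw [P_eq hk n x x, if_pos rfl])]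
  rw [Finset.sum_const, Finset.card_univ, card_V]
  push_cast
  ring

end CycRedAux

/-- The number of cyclically reduced words of length `n ≥ 1` in the free group `F_k`
over the inverse-closed basis of size `2k` is `(2k-1)^n + 1 + (k-1)(1 + (-1)^n)`;
equivalently, the growth series of the language of nonempty cyclically reduced words is
`1/(1-(2k-1)z) + 1/(1-z) + 2(k-1)/(1-z²) - 2k`. -/
theorem cyclically_reduced_count (k : ℕ) (hk : 1 ≤ k) (n : ℕ) (hn : 1 ≤ n) :
    (Set.ncard {w : List (Fin k × Bool) | w.length = n ∧ CyclicallyReduced w} : ℤ) =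
      ((2 * k : ℤ) - 1) ^ n + 1 + ((k : ℤ) - 1) * (1 + (-1 : ℤ) ^ n) := by
  classical
  obtain ⟨m, rfl⟩ : ∃ m, n = m + 1 := ⟨n - 1, by omega⟩
  have hcard : Set.ncard {w : List (Fin k × Bool) | w.length = m + 1 ∧ CyclicallyReduced w}
      = ∑ x : CycRedAux.V k, CycRedAux.P k (m+1) x x := by
    rw [CycRedAux.card_set m]
    have hdec : Fintype.card {f : Fin (m+1) → CycRedAux.V k //
        ∀ i : Fin (m+1), NonCancelling (f i) (f (i+1))}
        = ∑ x : CycRedAux.V k, Fintype.card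
            {f : {f : Fin (m+1) → CycRedAux.V k //
              ∀ i : Fin (m+1), NonCancelling (f i) (f (i+1))} // f.1 0 = x} := by
      rw [← Fintype.card_sigma]
      exact (Fintype.card_congr (Equiv.sigmaFiberEquiv
        (fun f : {f : Fin (m+1) → CycRedAux.V k //
          ∀ i : Fin (m+1), NonCancelling (f i) (f (i+1))} => f.1 0))).symm
    rw [hdec]
    exact Finset.sum_congr rfl (fun x _ => CycRedAux.card_cyc m x)
  rw [hcard]
  push_cast
  rw [CycRedAux.sum_P_diag hk (m+1)]
  obtain ⟨h1, h2, h3⟩ := CycRedAux.abc_identities hk (m+1)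
  linear_combination h3 + (k:ℤ) * h1
end
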